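/- Let C = P + εQ ∈ 𝔻ℍ[t] be a monic quadratic motion polynomial whose primal part P is divisible by no nonconstant real polynomial, and suppose its norm polynomial factors as C·C̄ = M₁·M₂ with M₁ ≠ M₂ monic irreducible real quadratic polynomials. Then there are exactly two ordered pairs (h₁, h₂) of dual quaternions with C = (t − h₁)(t − h₂) such that both t − h₁ and t − h₂ are motion polynomials; one pair satisfies (t − h₁)(t − h̄₁) = M₁ and the other satisfies (t − h₁)(t − h̄₁) = M₂. -/

import Mathlib

noncomputable section
open Polynomial

/-- The real quaternions ℍ. -/
abbrev Quat := Quaternion ℝ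

/-- The dual quaternions 𝔻ℍ = ℍ ⊕ εℍ, realized as dual numbers over ℍ.
An element is a pair `(p, q)` representing `p + εq`. -/
abbrev DQ := DualNumber Quat

/-- Conjugation of a dual quaternion `p + εq ↦ p̄ + εq̄`,
conjugating each quaternion part. -/
def dconj (h : DQ) : DQ := (star h.fst, star h.snd)

/-- The canonical ring homomorphism ℝ → 𝔻ℍ. -/
def realToDQ : ℝ →+* DQ := (TrivSqZeroExt.inlHom Quat Quat).comp (algebraMap ℝ Quat)

/-- Coefficientwise conjugate of a polynomial over 𝔻ℍ. -/
def pconj (C : DQ[X]) : DQ[X] := C.sum fun n a => Polynomial.C (dconj a) * X ^ n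

/-- `C ∈ 𝔻ℍ[t]` is a motion polynomial if `C C̄ ∈ ℝ[t] \ {0}` and the leading
coefficient of `C` is invertible. -/
def IsMotionPoly (C : DQ[X]) : Prop :=
  (∃ R : ℝ[X], R ≠ 0 ∧ C * pconj C = R.map realToDQ) ∧ IsUnit C.leadingCoeff

/-- The action of a dual quaternion `p + εq` (with `p ≠ 0` and satisfying the Study
condition) on a pure quaternion `x`:  `x ↦ (p x p̄ + p q̄ − q p̄)/N(p)`. -/
def act (p q x : Quat) : Quat :=
  (p * x * star p + p * star q - q * star p) * (p * star p)⁻¹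

/-- The dual quaternion `p + εq` from its primal part `p` and dual part `q`. -/
def dq (p q : Quat) : DQ := (p, q)

/-- The primal part of a polynomial over 𝔻ℍ: take the primal part of each
coefficient, giving a polynomial over ℍ. -/
def primal (C : DQ[X]) : Quat[X] :=
  C.map (TrivSqZeroExt.fstHom ℝ Quat Quat).toRingHom

/-- `P ∈ ℍ[t]` is divisible by no nonconstant real polynomial. -/
def NoRealFactor (P : Quat[X]) : Prop :=
  ∀ R : ℝ[X], 0 < R.natDegree → ¬ R.map (algebraMap ℝ Quat) ∣ P

-- basic dconj lemmas
@[simp] lemma dconj_fst (z : DQ) : (dconj z).fst = star z.fst := rfl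
@[simp] lemma dconj_snd (z : DQ) : (dconj z).snd = star z.snd := rfl

lemma dconj_add (x y : DQ) : dconj (x + y) = dconj x + dconj y := by
  apply TrivSqZeroExt.ext <;> simp [star_add]

lemma dconj_zero : dconj 0 = 0 := by
  apply TrivSqZeroExt.ext <;> simp

lemma dconj_one : dconj 1 = 1 := by
  apply TrivSqZeroExt.ext <;> simp

lemma dconj_neg (x : DQ) : dconj (-x) = - dconj x := by
  apply TrivSqZeroExt.ext <;> simp

lemma dconj_sub (x y : DQ) : dconj (x - y) = dconj x - dconj y := by
  apply TrivSqZeroExt.ext <;> simp [star_sub]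

lemma dconj_mul (x y : DQ) : dconj (x * y) = dconj y * dconj x := by
  apply TrivSqZeroExt.ext
  · simp [TrivSqZeroExt.fst_mul, star_mul]
  · simp [TrivSqZeroExt.snd_mul, star_add, star_mul, smul_eq_mul, op_smul_eq_mul]
    abel

lemma dconj_dconj (x : DQ) : dconj (dconj x) = x := by
  apply TrivSqZeroExt.ext <;> simp

@[simp] lemma realToDQ_fst (r : ℝ) : (realToDQ r).fst = algebraMap ℝ Quat r := rfl
@[simp] lemma realToDQ_snd (r : ℝ) : (realToDQ r).snd = 0 := rfl

lemma dconj_real (r : ℝ) : dconj (realToDQ r) = realToDQ r := by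
  apply TrivSqZeroExt.ext <;> simp [QuaternionAlgebra.coe_algebraMap]

lemma central (r : ℝ) (z : DQ) : realToDQ r * z = z * realToDQ r := by
  apply TrivSqZeroExt.ext
  · simp [TrivSqZeroExt.fst_mul, Quaternion.coe_commutes]
  · simp [TrivSqZeroExt.snd_mul, smul_eq_mul, op_smul_eq_mul, Quaternion.coe_commutes]

lemma norm_comm (z : DQ) : z * dconj z = dconj z * z := by
  apply TrivSqZeroExt.ext
  · simp [TrivSqZeroExt.fst_mul, Quaternion.self_mul_star, Quaternion.star_mul_self]
  · simp only [TrivSqZeroExt.snd_mul, smul_eq_mul, op_smul_eq_mul, dconj_fst, dconj_snd]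
    have h1 : z.fst * star z.snd + z.snd * star z.fst
        = (z.fst * star z.snd) + star (z.fst * star z.snd) := by
      rw [star_mul, star_star]
    have h2 : star z.fst * z.snd + star z.snd * z.fst
        = (star z.fst * z.snd) + star (star z.fst * z.snd) := by
      rw [star_mul, star_star]
    rw [h1, h2, Quaternion.self_add_star', Quaternion.self_add_star']
    congr 2
    simp [Quaternion.re_mul]

lemma realToDQ_inj : Function.Injective realToDQ := by
  intro r s h
  have := congrArg TrivSqZeroExt.fst h
  simp only [realToDQ_fst] at this
  exact Quaternion.coe_injective (by simpa [QuaternionAlgebra.coe_algebraMap] using this)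

lemma exists_inv (z : DQ) (h : z.fst ≠ 0) : ∃ w : DQ, z * w = 1 ∧ w * z = 1 := by
  refine ⟨TrivSqZeroExt.inl z.fst⁻¹ + TrivSqZeroExt.inr (-(z.fst⁻¹ * z.snd * z.fst⁻¹)), ?_, ?_⟩ <;>
    apply TrivSqZeroExt.ext <;>
    simp [TrivSqZeroExt.fst_mul, TrivSqZeroExt.snd_mul, smul_eq_mul, op_smul_eq_mul,
      mul_inv_cancel₀ h, inv_mul_cancel₀ h, mul_assoc, ← mul_assoc z.fst, mul_inv_cancel₀ h]

-- pconj coefficientwise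
lemma pconj_coeff (p : DQ[X]) (n : ℕ) : (pconj p).coeff n = dconj (p.coeff n) := by
  rw [pconj, Polynomial.sum_def]
  rw [Polynomial.finset_sum_coeff]
  simp only [Polynomial.coeff_C_mul, Polynomial.coeff_X_pow]
  by_cases h : n ∈ p.support
  · rw [Finset.sum_eq_single n]
    · simp
    · intro b _ hb
      simp [Ne.symm hb]
    · intro hn; exact absurd h hn
  · have h0 : p.coeff n = 0 := Polynomial.notMem_support_iff.mp h
    rw [h0, dconj_zero]
    apply Finset.sum_eq_zero
    intro b hb
    have : b ≠ n := by rintro rfl; exact h hb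
    simp [Ne.symm this]

-- expansion lemmas over an arbitrary ring
section Expand
variable {R : Type*} [Ring R]

lemma lin_mul_lin (h k : R) :
    (X - C h) * (X - C k) = X^2 + C (-(h+k)) * X + C (h*k) := by
  simp only [← monomial_one_one_eq_X, ← monomial_zero_left, monomial_pow,
    monomial_mul_monomial, sub_mul, mul_sub, add_mul, mul_add, map_add, map_neg, map_sub,
    neg_mul, mul_neg, neg_add, one_pow, mul_one, one_mul]
  abel

lemma quad_mul_quad (a b c d : R) :
    (X^2 + C a * X + C b) * (X^2 + C c * X + C d) =
      X^4 + C (a+c) * X^3 + C (a*c+b+d) * X^2 + C (a*d+b*c) * X + C (b*d) := by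
  simp only [← monomial_one_one_eq_X, ← monomial_zero_left, monomial_pow,
    monomial_mul_monomial, sub_mul, mul_sub, add_mul, mul_add, map_add, map_neg, map_sub,
    neg_mul, mul_neg, neg_add, one_pow, mul_one, one_mul]
  abel

lemma lin'_mul_lin' (p q r s : R) :
    (C p * X + C q) * (C r * X + C s) =
      C (p*r) * X^2 + C (p*s+q*r) * X + C (q*s) := by
  simp only [← monomial_one_one_eq_X, ← monomial_zero_left, monomial_pow,
    monomial_mul_monomial, sub_mul, mul_sub, add_mul, mul_add, map_add, map_neg, map_sub,
    neg_mul, mul_neg, neg_add, one_pow, mul_one, one_mul]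
  abel

lemma quad_mul_lin' (e f p q : R) :
    (X^2 + C e * X + C f) * (C p * X + C q) =
      C p * X^3 + C (q + e*p) * X^2 + C (e*q + f*p) * X + C (f*q) := by
  simp only [← monomial_one_one_eq_X, ← monomial_zero_left, monomial_pow,
    monomial_mul_monomial, sub_mul, mul_sub, add_mul, mul_add, map_add, map_neg, map_sub,
    neg_mul, mul_neg, neg_add, one_pow, mul_one, one_mul]
  abel

lemma lin'_mul_quad (e f p q : R) :
    (C p * X + C q) * (X^2 + C e * X + C f) =
      C p * X^3 + C (p*e + q) * X^2 + C (p*f + q*e) * X + C (q*f) := by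
  simp only [← monomial_one_one_eq_X, ← monomial_zero_left, monomial_pow,
    monomial_mul_monomial, sub_mul, mul_sub, add_mul, mul_add, map_add, map_neg, map_sub,
    neg_mul, mul_neg, neg_add, one_pow, mul_one, one_mul]
  abel

lemma lin_mul_quad (e f k : R) :
    (X - C k) * (X^2 + C e * X + C f) =
      X^3 + C (e - k) * X^2 + C (f - k*e) * X + C (-(k*f)) := by
  simp only [← monomial_one_one_eq_X, ← monomial_zero_left, monomial_pow,
    monomial_mul_monomial, sub_mul, mul_sub, add_mul, mul_add, map_add, map_neg, map_sub,
    neg_mul, mul_neg, neg_add, one_pow, mul_one, one_mul]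
  abel

lemma quad_mul_lin (e f k : R) :
    (X^2 + C e * X + C f) * (X - C k) =
      X^3 + C (e - k) * X^2 + C (f - e*k) * X + C (-(f*k)) := by
  simp only [← monomial_one_one_eq_X, ← monomial_zero_left, monomial_pow,
    monomial_mul_monomial, sub_mul, mul_sub, add_mul, mul_add, map_add, map_neg, map_sub,
    neg_mul, mul_neg, neg_add, one_pow, mul_one, one_mul]
  abel

-- coefficient injection lemmas
lemma quad_inj {u v u' v' : R}
    (h : X^2 + C u * X + C v = X^2 + C u' * X + C v') : u = u' ∧ v = v' := by
  constructor
  · have := congrArg (fun p => Polynomial.coeff p 1) h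
    simpa using this
  · have := congrArg (fun p => Polynomial.coeff p 0) h
    simpa using this

lemma cubic_inj {p3 p2 p1 p0 q3 q2 q1 q0 : R}
    (h : C p3 * X^3 + C p2 * X^2 + C p1 * X + C p0
       = C q3 * X^3 + C q2 * X^2 + C q1 * X + C q0) :
    p3 = q3 ∧ p2 = q2 ∧ p1 = q1 ∧ p0 = q0 := by
  refine ⟨?_, ?_, ?_, ?_⟩
  · have := congrArg (fun p => Polynomial.coeff p 3) h; simpa using this
  · have := congrArg (fun p => Polynomial.coeff p 2) h; simpa using this
  · have := congrArg (fun p => Polynomial.coeff p 1) h; simpa using this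
  · have := congrArg (fun p => Polynomial.coeff p 0) h; simpa using this

lemma quartic_inj {a3 a2 a1 a0 b3 b2 b1 b0 : R}
    (h : X^4 + C a3 * X^3 + C a2 * X^2 + C a1 * X + C a0
       = X^4 + C b3 * X^3 + C b2 * X^2 + C b1 * X + C b0) :
    a3 = b3 ∧ a2 = b2 ∧ a1 = b1 ∧ a0 = b0 := by
  refine ⟨?_, ?_, ?_, ?_⟩
  · have := congrArg (fun p => Polynomial.coeff p 3) h; simpa using this
  · have := congrArg (fun p => Polynomial.coeff p 2) h; simpa using this
  · have := congrArg (fun p => Polynomial.coeff p 1) h; simpa using this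
  · have := congrArg (fun p => Polynomial.coeff p 0) h; simpa using this

lemma monic_quad_eq (p : R[X]) (hm : p.Monic) (hd : p.natDegree = 2) :
    p = X^2 + C (p.coeff 1) * X + C (p.coeff 0) := by
  apply Polynomial.ext
  intro n
  match n with
  | 0 => simp
  | 1 => simp
  | 2 =>
    have h2 : p.coeff 2 = 1 := by
      have := hm.coeff_natDegree; rwa [hd] at this
    simp [h2, Polynomial.coeff_X_pow]
  | (n+3) =>
    have hlt : p.natDegree < n + 3 := by omega
    rw [Polynomial.coeff_eq_zero_of_natDegree_lt hlt]
    simp only [Polynomial.coeff_add, Polynomial.coeff_C_mul, Polynomial.coeff_X_pow,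
      Polynomial.coeff_X, Polynomial.coeff_C]
    rw [if_neg (by omega), if_neg (by omega), if_neg (by omega)]
    simp

end Expand

-- explicit forms
lemma rD_quad (M : ℝ[X]) (hm : M.Monic) (hd : M.natDegree = 2) :
    M.map realToDQ = X^2 + C (realToDQ (M.coeff 1)) * X + C (realToDQ (M.coeff 0)) := by
  conv_lhs => rw [monic_quad_eq M hm hd]
  simp [Polynomial.map_add, Polynomial.map_mul, Polynomial.map_pow]

lemma quad_coeff {R : Type*} [Ring R] (u v : R) (n : ℕ) :
    (X^2 + C u * X + C v).coeff n =
      if n = 2 then 1 else if n = 1 then u else if n = 0 then v else 0 := by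
  match n with
  | 0 => simp
  | 1 => simp
  | 2 => simp [Polynomial.coeff_X_pow]
  | (n+3) =>
    simp [Polynomial.coeff_X_pow]

lemma pconj_quad (u v : DQ) :
    pconj (X^2 + C u * X + C v) = X^2 + C (dconj u) * X + C (dconj v) := by
  apply Polynomial.ext
  intro n
  rw [pconj_coeff, quad_coeff, quad_coeff]
  split_ifs <;> simp [dconj_one, dconj_zero]

lemma lin_coeff (k : DQ) (n : ℕ) :
    (X - C k).coeff n = if n = 1 then 1 else if n = 0 then -k else 0 := by
  match n with
  | 0 => simp
  | 1 => simp
  | (n+2) =>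
    simp [Polynomial.coeff_X]

lemma pconj_lin (k : DQ) : pconj (X - C k) = X - C (dconj k) := by
  apply Polynomial.ext
  intro n
  rw [pconj_coeff, lin_coeff, lin_coeff]
  split_ifs <;> simp [dconj_one, dconj_zero, dconj_neg]

lemma motion_linear_iff (k : DQ) :
    IsMotionPoly (X - C k) ↔
      ∃ u v : ℝ, k + dconj k = realToDQ u ∧ k * dconj k = realToDQ v := by
  constructor
  · rintro ⟨⟨R, -, hR⟩, -⟩
    rw [pconj_lin, lin_mul_lin] at hR
    refine ⟨-(R.coeff 1), R.coeff 0, ?_, ?_⟩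
    · have := congrArg (fun p => Polynomial.coeff p 1) hR
      simp only [quad_coeff, Polynomial.coeff_map] at this
      simp only [if_neg (by omega : ¬(1:ℕ) = 2), if_pos rfl] at this
      rw [map_neg, ← this]
      simp
    · have := congrArg (fun p => Polynomial.coeff p 0) hR
      simp only [quad_coeff, Polynomial.coeff_map] at this
      simp only [if_neg (by omega : ¬(0:ℕ) = 2), if_neg (by omega : ¬(0:ℕ) = 1),
        if_pos rfl] at this
      simp only [if_true] at this
      exact this

  · rintro ⟨u, v, hu, hv⟩
    constructor
    · refine ⟨X^2 + Polynomial.C (-u) * X + Polynomial.C v, ?_, ?_⟩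
      · intro h0
        have := congrArg (fun p => Polynomial.coeff p 2) h0
        simp [quad_coeff] at this
      · rw [pconj_lin, lin_mul_lin]
        simp only [Polynomial.map_add, Polynomial.map_mul, Polynomial.map_pow,
          Polynomial.map_X, Polynomial.map_C]
        rw [hu, hv, map_neg realToDQ u, Polynomial.C_neg]
    · rw [Polynomial.leadingCoeff_X_sub_C]
      exact isUnit_one

lemma monic_dvd_eq (M N : ℝ[X]) (hM : M.Monic) (hN : N.Monic)
    (hdeg : M.natDegree = N.natDegree) (hdvd : M ∣ N) : M = N := by
  obtain ⟨q, hq⟩ := hdvd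
  have hM0 : M ≠ 0 := hM.ne_zero
  have hq0 : q ≠ 0 := by rintro rfl; rw [mul_zero] at hq; exact hN.ne_zero hq
  have hdq : q.natDegree = 0 := by
    have := Polynomial.natDegree_mul hM0 hq0
    rw [← hq, ← hdeg] at this
    omega
  have hlq : q.leadingCoeff = 1 := by
    have := hN.leadingCoeff
    rw [hq, Polynomial.leadingCoeff_mul, hM.leadingCoeff, one_mul] at this
    exact this
  have : q = 1 := by
    rw [Polynomial.eq_C_of_natDegree_eq_zero hdq]
    rw [Polynomial.eq_C_of_natDegree_eq_zero hdq] at hlq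
    rw [Polynomial.leadingCoeff_C] at hlq
    rw [hlq, map_one]
  rw [hq, this, mul_one]

-- commuting of linear polynomials with real quadratics
lemma lin_comm_quad (k : DQ) (e f : ℝ) :
    (X - C k) * (X^2 + C (realToDQ e) * X + C (realToDQ f)) =
    (X^2 + C (realToDQ e) * X + C (realToDQ f)) * (X - C k) := by
  rw [lin_mul_quad, quad_mul_lin]
  rw [central e k, central f k]

lemma lin'_comm_quad (a b : DQ) (e f : ℝ) :
    (C a * X + C b) * (X^2 + C (realToDQ e) * X + C (realToDQ f)) =
    (X^2 + C (realToDQ e) * X + C (realToDQ f)) * (C a * X + C b) := by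
  rw [lin'_mul_quad, quad_mul_lin', central e a, central e b, central f a, central f b,
    add_comm b (a * realToDQ e), add_comm (b * realToDQ e) (a * realToDQ f)]



section KeyHelpers

lemma quad_natDegree {R : Type*} [Ring R] [Nontrivial R] (u v : R) :
    (X^2 + C u * X + C v).natDegree = 2 := by
  have h : (X^2 + C u * X + C v : R[X]) = C 1 * X^2 + C u * X + C v := by
    rw [map_one, one_mul]
  rw [h]
  exact Polynomial.natDegree_quadratic one_ne_zero

lemma quad_monic {R : Type*} [Ring R] [Nontrivial R] (u v : R) :
    (X^2 + C u * X + C v : R[X]).Monic := by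
  unfold Polynomial.Monic Polynomial.leadingCoeff
  rw [quad_natDegree, quad_coeff]
  simp

lemma sandwich (r : ℝ) {a a' : DQ} (ha2 : a' * a = 1) (hA2 : dconj a * dconj a' = 1) :
    a' * (realToDQ r * (a * dconj a) * dconj a') = realToDQ r := by
  rw [mul_assoc (realToDQ r) (a * dconj a) (dconj a'),
    central r ((a * dconj a) * dconj a'), ← mul_assoc a']
  have h : a' * (a * dconj a * dconj a') = (a' * a) * (dconj a * dconj a') := by
    noncomm_ring
  rw [h, ha2, hA2, one_mul, one_mul]

end KeyHelpers

set_option maxHeartbeats 1000000 in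
lemma key (Cp : DQ[X]) (c1 c0 : DQ)
    (hC : Cp = X^2 + C c1 * X + C c0)
    (hprim : NoRealFactor (primal Cp))
    (M M' : ℝ[X]) (hM : M.Monic) (hdM : M.natDegree = 2)
    (hM' : M'.Monic) (hdM' : M'.natDegree = 2)
    (hnorm : Cp * pconj Cp = (M * M').map realToDQ) :
    ∃ h₁ h₂ : DQ,
      (c1 = -(h₁ + h₂) ∧ c0 = h₁ * h₂) ∧
      (h₂ + dconj h₂ = realToDQ (-(M.coeff 1)) ∧ h₂ * dconj h₂ = realToDQ (M.coeff 0)) ∧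
      (h₁ + dconj h₁ = realToDQ (-(M'.coeff 1)) ∧ h₁ * dconj h₁ = realToDQ (M'.coeff 0)) ∧
      (∀ k₁ k₂ : DQ, c1 = -(k₁ + k₂) → c0 = k₁ * k₂ →
        k₂ + dconj k₂ = realToDQ (-(M.coeff 1)) → k₂ * dconj k₂ = realToDQ (M.coeff 0) →
        k₁ = h₁ ∧ k₂ = h₂) := by
  set n1 := M.coeff 1 with hn1def
  set n0 := M.coeff 0 with hn0def
  set m1 := M'.coeff 1 with hm1def
  set m0 := M'.coeff 0 with hm0def
  set a := c1 - realToDQ n1 with hadef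
  set b := c0 - realToDQ n0 with hbdef
  have hMex : M.map realToDQ = X^2 + C (realToDQ n1) * X + C (realToDQ n0) :=
    rD_quad M hM hdM
  have hM'ex : M'.map realToDQ = X^2 + C (realToDQ m1) * X + C (realToDQ m0) :=
    rD_quad M' hM' hdM'
  have hCbar : pconj Cp = X^2 + C (dconj c1) * X + C (dconj c0) := by
    rw [hC, pconj_quad]
  have hda : dconj a = dconj c1 - realToDQ n1 := by
    rw [hadef, dconj_sub, dconj_real]
  have hdb : dconj b = dconj c0 - realToDQ n0 := by
    rw [hbdef, dconj_sub, dconj_real]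
  -- the L-decomposition of Cp and pconj Cp
  have hL : Cp = (X^2 + C (realToDQ n1) * X + C (realToDQ n0)) + (C a * X + C b) := by
    rw [hC, hadef, hbdef, Polynomial.C_sub, Polynomial.C_sub, sub_mul]
    abel
  have hLbar : pconj Cp =
      (X^2 + C (realToDQ n1) * X + C (realToDQ n0)) + (C (dconj a) * X + C (dconj b)) := by
    rw [hCbar, hda, hdb, Polynomial.C_sub, Polynomial.C_sub, sub_mul]
    abel
  set g1 := realToDQ m1 - realToDQ n1 - a - dconj a with hg1def
  set g0 := realToDQ m0 - realToDQ n0 - b - dconj b with hg0def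
  set Mex : DQ[X] := X^2 + C (realToDQ n1) * X + C (realToDQ n0) with hMexdef
  set L : DQ[X] := C a * X + C b with hLdef
  set Lb : DQ[X] := C (dconj a) * X + C (dconj b) with hLbdef
  -- main polynomial identity
  have hmain : L * Lb = Mex * (C g1 * X + C g0) := by
    have hE : Mex * Mex + Mex * Lb + L * Mex + L * Lb
        = Mex * (X^2 + C (realToDQ m1) * X + C (realToDQ m0)) := by
      have h1 : (Mex + L) * (Mex + Lb)
          = Mex * Mex + Mex * Lb + L * Mex + L * Lb := by noncomm_ring
      rw [← h1, ← hL, ← hLbar, hnorm, Polynomial.map_mul, hMex, hM'ex]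
    have hcomm : L * Mex = Mex * L := by
      rw [hLdef, hMexdef]
      exact lin'_comm_quad a b n1 n0
    have hG : C g1 * X + C g0
        = (X^2 + C (realToDQ m1) * X + C (realToDQ m0)) - Mex - L - Lb := by
      rw [hg1def, hg0def, hMexdef, hLdef, hLbdef]
      simp only [Polynomial.C_sub, sub_mul]
      abel
    rw [hG, mul_sub, mul_sub, mul_sub, ← hE, ← hcomm]
    abel
  -- coefficient extraction
  have hLLb : L * Lb = C (a * dconj a) * X^2 + C (a * dconj b + b * dconj a) * X
      + C (b * dconj b) := by
    rw [hLdef, hLbdef]; exact lin'_mul_lin' a b (dconj a) (dconj b)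
  have hRHSx : Mex * (C g1 * X + C g0) = C g1 * X^3 + C (g0 + realToDQ n1 * g1) * X^2
      + C (realToDQ n1 * g0 + realToDQ n0 * g1) * X + C (realToDQ n0 * g0) := by
    rw [hMexdef]; exact quad_mul_lin' (realToDQ n1) (realToDQ n0) g1 g0
  have hexp : C (0:DQ) * X^3 + C (a * dconj a) * X^2 + C (a * dconj b + b * dconj a) * X
        + C (b * dconj b)
      = C g1 * X^3 + C (g0 + realToDQ n1 * g1) * X^2
        + C (realToDQ n1 * g0 + realToDQ n0 * g1) * X + C (realToDQ n0 * g0) := by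
    rw [map_zero, zero_mul, zero_add, ← hLLb, hmain, hRHSx]
  obtain ⟨e3, e2, e1, e0⟩ := cubic_inj hexp
  have hg1zero : g1 = 0 := e3.symm
  have hg0aa : a * dconj a = g0 := by rw [e2, hg1zero, mul_zero, add_zero]
  have e1' : a * dconj b + b * dconj a = realToDQ n1 * (a * dconj a) := by
    rw [e1, hg1zero, mul_zero, add_zero, ← hg0aa]
  have e0' : b * dconj b = realToDQ n0 * (a * dconj a) := by
    rw [e0, ← hg0aa]
  have hE3 : c1 + dconj c1 = realToDQ m1 + realToDQ n1 := by
    have h1 : g1 = realToDQ m1 + realToDQ n1 - (c1 + dconj c1) := by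
      rw [hg1def, hda, hadef]; abel
    have h2 : realToDQ m1 + realToDQ n1 - (c1 + dconj c1) = 0 := by
      rw [← h1, hg1zero]
    exact (sub_eq_zero.mp h2).symm
  -- invertibility of a
  have hfa : TrivSqZeroExt.fst a ≠ 0 := by
    intro h0
    have hb0 : TrivSqZeroExt.fst b = 0 := by
      have h := congrArg TrivSqZeroExt.fst e0'
      simp only [TrivSqZeroExt.fst_mul, dconj_fst, realToDQ_fst, h0, zero_mul,
        mul_zero] at h
      have h2 : ((Quaternion.normSq (TrivSqZeroExt.fst b) : ℝ) : Quat) = 0 := by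
        rw [← Quaternion.self_mul_star]; exact h
      have h3 : Quaternion.normSq (TrivSqZeroExt.fst b) = 0 :=
        Quaternion.coe_injective (by rw [h2]; simp)
      exact Quaternion.normSq_eq_zero.mp h3
    have hc1f : TrivSqZeroExt.fst c1 = algebraMap ℝ Quat n1 := by
      have h := h0
      rw [hadef, TrivSqZeroExt.fst_sub, realToDQ_fst] at h
      exact sub_eq_zero.mp h
    have hc0f : TrivSqZeroExt.fst c0 = algebraMap ℝ Quat n0 := by
      have h := hb0
      rw [hbdef, TrivSqZeroExt.fst_sub, realToDQ_fst] at h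
      exact sub_eq_zero.mp h
    apply hprim M (by rw [hdM]; norm_num)
    have hPrimEq : primal Cp = M.map (algebraMap ℝ Quat) := by
      unfold primal
      rw [hC]
      conv_rhs => rw [monic_quad_eq M hM hdM]
      simp only [Polynomial.map_add, Polynomial.map_mul, Polynomial.map_pow,
        Polynomial.map_X, Polynomial.map_C]
      have hfc1 : (TrivSqZeroExt.fstHom ℝ Quat Quat).toRingHom c1
          = TrivSqZeroExt.fst c1 := rfl
      have hfc0 : (TrivSqZeroExt.fstHom ℝ Quat Quat).toRingHom c0
          = TrivSqZeroExt.fst c0 := rfl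
      rw [hfc1, hfc0, hc1f, hc0f, ← hn1def, ← hn0def]
    rw [hPrimEq]
  obtain ⟨a', ha1, ha2⟩ := exists_inv a hfa
  have hA1 : dconj a' * dconj a = 1 := by rw [← dconj_mul, ha1, dconj_one]
  have hA2 : dconj a * dconj a' = 1 := by rw [← dconj_mul, ha2, dconj_one]
  set h₂ : DQ := -(a' * b) with hh2def
  have hdh2 : dconj h₂ = -(dconj b * dconj a') := by
    rw [hh2def, dconj_neg, dconj_mul]
  have hsum2 : h₂ + dconj h₂ = realToDQ (-n1) := by
    have expand : a' * ((a * dconj b + b * dconj a) * dconj a')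
        = dconj b * dconj a' + a' * b := by
      have h1 : a' * ((a * dconj b) * dconj a') = (a' * a) * (dconj b * dconj a') := by
        noncomm_ring
      have h2 : a' * ((b * dconj a) * dconj a') = (a' * b) * (dconj a * dconj a') := by
        noncomm_ring
      rw [add_mul, mul_add, h1, h2, ha2, hA2, one_mul, mul_one]
    have hsw : a' * ((a * dconj b + b * dconj a) * dconj a') = realToDQ n1 := by
      rw [e1']; exact sandwich n1 ha2 hA2
    calc h₂ + dconj h₂ = -(dconj b * dconj a' + a' * b) := by rw [hdh2, hh2def]; abel
      _ = -(a' * ((a * dconj b + b * dconj a) * dconj a')) := by rw [expand]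
      _ = realToDQ (-n1) := by rw [hsw, map_neg realToDQ]
  have hprod2 : h₂ * dconj h₂ = realToDQ n0 := by
    have h1 : h₂ * dconj h₂ = a' * ((b * dconj b) * dconj a') := by
      rw [hdh2, hh2def, neg_mul_neg]
      noncomm_ring
    rw [h1, e0']
    exact sandwich n0 ha2 hA2
  set h₁ : DQ := -c1 - h₂ with hh1def
  have hP1a : c1 = -(h₁ + h₂) := by rw [hh1def]; abel
  have hroot : a * h₂ + b = 0 := by
    rw [hh2def, mul_neg, ← mul_assoc, ha1, one_mul, neg_add_cancel]
  have hn1eq : realToDQ n1 = -(h₂ + dconj h₂) := by rw [hsum2, map_neg realToDQ, neg_neg]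
  have hstudy : h₂ * h₂ + realToDQ n1 * h₂ + realToDQ n0 = 0 := by
    rw [hn1eq, ← hprod2, norm_comm]
    noncomm_ring
  have hc1ab : c1 = a + realToDQ n1 := by rw [hadef]; abel
  have hc0ab : c0 = b + realToDQ n0 := by rw [hbdef]; abel
  have hP1b : c0 = h₁ * h₂ := by
    have hexp2 : h₁ * h₂ = -(a * h₂) - (h₂ * h₂ + realToDQ n1 * h₂) := by
      rw [hh1def, hc1ab]; noncomm_ring
    have hah2 : a * h₂ = -b := eq_neg_of_add_eq_zero_left hroot
    have hsum : h₂ * h₂ + realToDQ n1 * h₂ = -(realToDQ n0) :=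
      eq_neg_of_add_eq_zero_left hstudy
    rw [hexp2, hah2, hsum, hc0ab]; abel
  have hdh1 : dconj h₁ = -(dconj c1) - dconj h₂ := by
    rw [hh1def, dconj_sub, dconj_neg]
  have hsum1 : h₁ + dconj h₁ = realToDQ (-m1) := by
    have h1 : h₁ + dconj h₁ = -(c1 + dconj c1) - (h₂ + dconj h₂) := by
      rw [hdh1, hh1def]; abel
    rw [h1, hE3, hsum2, map_neg realToDQ, map_neg realToDQ]
    abel
  have hfac : Cp = (X - C h₁) * (X - C h₂) := by
    rw [hC, lin_mul_lin, ← hP1a, ← hP1b]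
  have hdc1 : dconj c1 = -(dconj h₂ + dconj h₁) := by
    rw [hP1a, dconj_neg, dconj_add]
    abel
  have hdc0 : dconj c0 = dconj h₂ * dconj h₁ := by rw [hP1b, dconj_mul]
  have hfacbar : pconj Cp = (X - C (dconj h₂)) * (X - C (dconj h₁)) := by
    rw [hCbar, lin_mul_lin, hdc1, hdc0]
  have hmid : (X - C h₂) * (X - C (dconj h₂))
      = X^2 + C (realToDQ n1) * X + C (realToDQ n0) := by
    rw [lin_mul_lin, hsum2, map_neg realToDQ, neg_neg, hprod2]
  have hs : h₁ * dconj h₁ = realToDQ m0 := by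
    have hq1 : (X - C h₁) * (X - C (dconj h₁))
        = X^2 + C (realToDQ m1) * X + C (h₁ * dconj h₁) := by
      rw [lin_mul_lin, hsum1, map_neg realToDQ, neg_neg]
    have hchain : (X^2 + C (realToDQ n1) * X + C (realToDQ n0))
          * ((X - C h₁) * (X - C (dconj h₁)))
        = (X^2 + C (realToDQ n1) * X + C (realToDQ n0))
          * (X^2 + C (realToDQ m1) * X + C (realToDQ m0)) := by
      calc (X^2 + C (realToDQ n1) * X + C (realToDQ n0))
            * ((X - C h₁) * (X - C (dconj h₁)))
          = ((X^2 + C (realToDQ n1) * X + C (realToDQ n0)) * (X - C h₁))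
              * (X - C (dconj h₁)) := by rw [mul_assoc]
        _ = ((X - C h₁) * (X^2 + C (realToDQ n1) * X + C (realToDQ n0)))
              * (X - C (dconj h₁)) := by rw [lin_comm_quad h₁ n1 n0]
        _ = ((X - C h₁) * ((X - C h₂) * (X - C (dconj h₂)))) * (X - C (dconj h₁)) := by
            rw [hmid]
        _ = ((X - C h₁) * (X - C h₂)) * ((X - C (dconj h₂)) * (X - C (dconj h₁))) := by
            noncomm_ring
        _ = Cp * pconj Cp := by rw [← hfac, ← hfacbar]
        _ = Polynomial.map realToDQ M * Polynomial.map realToDQ M' := by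
            rw [hnorm, Polynomial.map_mul]
        _ = (X^2 + C (realToDQ n1) * X + C (realToDQ n0))
              * (X^2 + C (realToDQ m1) * X + C (realToDQ m0)) := by rw [hMex, hM'ex]
    rw [hq1, quad_mul_quad, quad_mul_quad] at hchain
    have hco := quartic_inj hchain
    exact add_left_cancel hco.2.1
  refine ⟨h₁, h₂, ⟨hP1a, hP1b⟩, ⟨hsum2, hprod2⟩, ⟨hsum1, hs⟩, ?_⟩
  intro k₁ k₂ hk1 hk0 hks hkp
  have hn1k : realToDQ n1 = -(k₂ + dconj k₂) := by rw [hks, map_neg realToDQ, neg_neg]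
  have hrootk : a * k₂ + b = 0 := by
    rw [hadef, hbdef, hk1, hk0, hn1k, ← hkp, norm_comm]
    noncomm_ring
  have hk2 : k₂ = h₂ := by
    have h1 : a * k₂ = -b := eq_neg_of_add_eq_zero_left hrootk
    have h2 : a' * (a * k₂) = a' * (-b) := by rw [h1]
    rw [← mul_assoc, ha2, one_mul, mul_neg] at h2
    rw [h2, hh2def]
  have hk1' : k₁ = h₁ := by
    have hx : k₁ = -c1 - k₂ := by rw [hk1]; abel
    rw [hx, hk2, hh1def]
  exact ⟨hk1', hk2⟩


lemma map_quad (u v : ℝ) :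
    (X^2 + C u * X + C v).map realToDQ
      = X^2 + C (realToDQ u) * X + C (realToDQ v) := by
  simp [Polynomial.map_add, Polynomial.map_mul, Polynomial.map_pow]

set_option maxHeartbeats 1600000 in
/-- A monic quadratic motion polynomial C, with primal part having no
nonconstant real factor and norm polynomial C·C̄ = M₁·M₂ a product of two distinct
monic irreducible real quadratics, admits exactly two factorizations
`C = (t − h₁)(t − h₂)` into monic linear motion polynomials; for one of them
`(t − h₁)(t − h̄₁) = M₁`, for the other `(t − h₁)(t − h̄₁) = M₂`. -/
theorem stmt14 (C : DQ[X]) (hmonic : C.Monic) (hdeg : C.natDegree = 2)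
    (hmp : IsMotionPoly C) (hprim : NoRealFactor (primal C))
    (M₁ M₂ : ℝ[X]) (hM₁ : M₁.Monic) (hM₂ : M₂.Monic)
    (hd₁ : M₁.natDegree = 2) (hd₂ : M₂.natDegree = 2)
    (hirr₁ : Irreducible M₁) (hirr₂ : Irreducible M₂) (hne : M₁ ≠ M₂)
    (hnorm : C * pconj C = (M₁ * M₂).map realToDQ) :
    ∃ a b : DQ × DQ, a ≠ b ∧
      {hp : DQ × DQ |
          C = (X - Polynomial.C hp.1) * (X - Polynomial.C hp.2) ∧
          IsMotionPoly (X - Polynomial.C hp.1) ∧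
          IsMotionPoly (X - Polynomial.C hp.2)} = {a, b} ∧
      (X - Polynomial.C a.1) * (X - Polynomial.C (dconj a.1)) = M₁.map realToDQ ∧
      (X - Polynomial.C b.1) * (X - Polynomial.C (dconj b.1)) = M₂.map realToDQ := by
  have hC : C = X^2 + Polynomial.C (C.coeff 1) * X + Polynomial.C (C.coeff 0) :=
    monic_quad_eq C hmonic hdeg
  obtain ⟨h₁, h₂, ⟨hA1a, hA1b⟩, ⟨hA2s, hA2p⟩, ⟨hA3s, hA3p⟩, hAuniq⟩ :=
    key C (C.coeff 1) (C.coeff 0) hC hprim M₂ M₁ hM₂ hd₂ hM₁ hd₁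
      (by rw [hnorm, mul_comm])
  obtain ⟨g₁, g₂, ⟨hB1a, hB1b⟩, ⟨hB2s, hB2p⟩, ⟨hB3s, hB3p⟩, hBuniq⟩ :=
    key C (C.coeff 1) (C.coeff 0) hC hprim M₁ M₂ hM₁ hd₁ hM₂ hd₂ hnorm
  have hCbar : pconj C = X^2 + Polynomial.C (dconj (C.coeff 1)) * X
      + Polynomial.C (dconj (C.coeff 0)) := by
    conv_lhs => rw [hC]
    rw [pconj_quad]
  refine ⟨(h₁, h₂), (g₁, g₂), ?_, ?_, ?_, ?_⟩
  · -- the two pairs are distinct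
    intro h
    have hh : h₁ = g₁ := by
      have := congrArg Prod.fst h
      simpa using this
    have e1 : M₁.coeff 1 = M₂.coeff 1 := by
      have hx : realToDQ (-(M₁.coeff 1)) = realToDQ (-(M₂.coeff 1)) := by
        rw [← hA3s, hh, hB3s]
      have := realToDQ_inj hx
      linarith [neg_injective this]
    have e0 : M₁.coeff 0 = M₂.coeff 0 := by
      apply realToDQ_inj
      rw [← hA3p, hh, hB3p]
    apply hne
    rw [monic_quad_eq M₁ hM₁ hd₁, monic_quad_eq M₂ hM₂ hd₂, e1, e0]
  · -- set equality
    ext ⟨k₁, k₂⟩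
    simp only [Set.mem_setOf_eq, Set.mem_insert_iff, Set.mem_singleton_iff, Prod.mk.injEq]
    constructor
    · rintro ⟨hfac, hm1, hm2⟩
      have hco : C.coeff 1 = -(k₁ + k₂) ∧ C.coeff 0 = k₁ * k₂ := by
        have h : X^2 + Polynomial.C (C.coeff 1) * X + Polynomial.C (C.coeff 0)
            = X^2 + Polynomial.C (-(k₁ + k₂)) * X + Polynomial.C (k₁ * k₂) := by
          rw [← hC, hfac, lin_mul_lin]
        exact quad_inj h
      obtain ⟨hk1, hk0⟩ := hco
      obtain ⟨u₁, v₁, hu1, hv1⟩ := (motion_linear_iff k₁).mp hm1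
      obtain ⟨u₂, v₂, hu2, hv2⟩ := (motion_linear_iff k₂).mp hm2
      have hdc1 : dconj (C.coeff 1) = -(dconj k₂ + dconj k₁) := by
        rw [hk1, dconj_neg, dconj_add]; abel
      have hdc0 : dconj (C.coeff 0) = dconj k₂ * dconj k₁ := by
        rw [hk0, dconj_mul]
      have hfacbar : pconj C = (X - Polynomial.C (dconj k₂)) * (X - Polynomial.C (dconj k₁)) := by
        rw [hCbar, lin_mul_lin, hdc1, hdc0]
      have hmid2 : (X - Polynomial.C k₂) * (X - Polynomial.C (dconj k₂))
          = X^2 + Polynomial.C (realToDQ (-u₂)) * X + Polynomial.C (realToDQ v₂) := by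
        rw [lin_mul_lin, hu2, hv2, map_neg realToDQ]
      have hmid1 : (X - Polynomial.C k₁) * (X - Polynomial.C (dconj k₁))
          = X^2 + Polynomial.C (realToDQ (-u₁)) * X + Polynomial.C (realToDQ v₁) := by
        rw [lin_mul_lin, hu1, hv1, map_neg realToDQ]
      have hCCbar : C * pconj C
          = ((X^2 + Polynomial.C (-u₂) * X + Polynomial.C v₂)
              * (X^2 + Polynomial.C (-u₁) * X + Polynomial.C v₁)).map realToDQ := by
        rw [Polynomial.map_mul, map_quad, map_quad]
        calc C * pconj C
            = ((X - Polynomial.C k₁) * (X - Polynomial.C k₂))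
                * ((X - Polynomial.C (dconj k₂)) * (X - Polynomial.C (dconj k₁))) := by
              rw [← hfac, ← hfacbar]
          _ = ((X - Polynomial.C k₁) * ((X - Polynomial.C k₂) * (X - Polynomial.C (dconj k₂))))
                * (X - Polynomial.C (dconj k₁)) := by noncomm_ring
          _ = ((X - Polynomial.C k₁)
                * (X^2 + Polynomial.C (realToDQ (-u₂)) * X + Polynomial.C (realToDQ v₂)))
                * (X - Polynomial.C (dconj k₁)) := by rw [hmid2]
          _ = ((X^2 + Polynomial.C (realToDQ (-u₂)) * X + Polynomial.C (realToDQ v₂))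
                * (X - Polynomial.C k₁)) * (X - Polynomial.C (dconj k₁)) := by
              rw [lin_comm_quad k₁ (-u₂) v₂]
          _ = (X^2 + Polynomial.C (realToDQ (-u₂)) * X + Polynomial.C (realToDQ v₂))
                * ((X - Polynomial.C k₁) * (X - Polynomial.C (dconj k₁))) := by
              rw [mul_assoc]
          _ = (X^2 + Polynomial.C (realToDQ (-u₂)) * X + Polynomial.C (realToDQ v₂))
                * (X^2 + Polynomial.C (realToDQ (-u₁)) * X + Polynomial.C (realToDQ v₁)) := by
              rw [hmid1]
      have hNfac : M₁ * M₂ = (X^2 + Polynomial.C (-u₂) * X + Polynomial.C v₂)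
          * (X^2 + Polynomial.C (-u₁) * X + Polynomial.C v₁) := by
        apply Polynomial.map_injective realToDQ realToDQ_inj
        rw [← hnorm, hCCbar]
      have hdvd : M₁ ∣ (X^2 + Polynomial.C (-u₂) * X + Polynomial.C v₂)
          * (X^2 + Polynomial.C (-u₁) * X + Polynomial.C v₁) := ⟨M₂, hNfac.symm⟩
      rcases (hirr₁.prime).2.2 _ _ hdvd with hd2 | hd1
      · -- M₁ = N₂ : the pair is (g₁, g₂)
        right
        have hN2 : M₁ = X^2 + Polynomial.C (-u₂) * X + Polynomial.C v₂ :=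
          monic_dvd_eq _ _ hM₁ (quad_monic _ _) (by rw [hd₁, quad_natDegree]) hd2
        have hcoe := quad_inj ((monic_quad_eq M₁ hM₁ hd₁).symm.trans hN2)
        have hks : k₂ + dconj k₂ = realToDQ (-(M₁.coeff 1)) := by
          rw [hu2, hcoe.1]; norm_num
        have hkp : k₂ * dconj k₂ = realToDQ (M₁.coeff 0) := by rw [hv2, hcoe.2]
        obtain ⟨hx1, hx2⟩ := hBuniq k₁ k₂ hk1 hk0 hks hkp
        exact ⟨hx1, hx2⟩
      · -- M₁ = N₁, hence M₂ = N₂ : the pair is (h₁, h₂)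
        left
        have hN1 : M₁ = X^2 + Polynomial.C (-u₁) * X + Polynomial.C v₁ :=
          monic_dvd_eq _ _ hM₁ (quad_monic _ _) (by rw [hd₁, quad_natDegree]) hd1
        have hN2 : M₂ = X^2 + Polynomial.C (-u₂) * X + Polynomial.C v₂ := by
          have h1 : (X^2 + Polynomial.C (-u₂) * X + Polynomial.C v₂) * M₁ = M₂ * M₁ := by
            rw [mul_comm M₂ M₁, hNfac, hN1]
          exact (mul_right_cancel₀ hM₁.ne_zero h1).symm
        have hcoe := quad_inj ((monic_quad_eq M₂ hM₂ hd₂).symm.trans hN2)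
        have hks : k₂ + dconj k₂ = realToDQ (-(M₂.coeff 1)) := by
          rw [hu2, hcoe.1]; norm_num
        have hkp : k₂ * dconj k₂ = realToDQ (M₂.coeff 0) := by rw [hv2, hcoe.2]
        obtain ⟨hx1, hx2⟩ := hAuniq k₁ k₂ hk1 hk0 hks hkp
        exact ⟨hx1, hx2⟩
    · rintro (⟨rfl, rfl⟩ | ⟨rfl, rfl⟩)
      · exact ⟨by rw [hC, lin_mul_lin, ← hA1a, ← hA1b],
          (motion_linear_iff _).mpr ⟨-(M₁.coeff 1), M₁.coeff 0, hA3s, hA3p⟩,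
          (motion_linear_iff _).mpr ⟨-(M₂.coeff 1), M₂.coeff 0, hA2s, hA2p⟩⟩
      · exact ⟨by rw [hC, lin_mul_lin, ← hB1a, ← hB1b],
          (motion_linear_iff _).mpr ⟨-(M₂.coeff 1), M₂.coeff 0, hB3s, hB3p⟩,
          (motion_linear_iff _).mpr ⟨-(M₁.coeff 1), M₁.coeff 0, hB2s, hB2p⟩⟩
  · -- norm of first factor of pair a is M₁
    rw [lin_mul_lin, hA3s, map_neg realToDQ, neg_neg, hA3p, rD_quad M₁ hM₁ hd₁]
  · -- norm of first factor of pair b is M₂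
    rw [lin_mul_lin, hB3s, map_neg realToDQ, neg_neg, hB3p, rD_quad M₂ hM₂ hd₂]
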